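/- Let z, ζ : Finset ℂ with (↑z : Set ℂ) ∩ (↑ζ : Set ℂ) = ∅, let n : ℂ → ℕ, m : ℂ → ℕ, and m∞ : ℕ. Let Q : Polynomial ℂ with Q.natDegree ≤ ∑_{y ∈ ζ} m y + m∞, and suppose ∑_{x ∈ z} n x = ∑_{y ∈ ζ} m y + m∞ + 2. Define f : ℂ → ℂ by f w = Polynomial.eval w Q / ∏_{y ∈ ζ} (w - y)^(m y). If for every x ∈ z and every p < n x one has iteratedDeriv p f x = 0 (iterated derivative over ℂ), then Q = 0, and hence f = 0. -/

import Mathlib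

open Polynomial Finset

private lemma analyticOnNhd_iteratedDeriv' {U : Set ℂ} {f : ℂ → ℂ}
    (hf : AnalyticOnNhd ℂ f U) (i : ℕ) : AnalyticOnNhd ℂ (iteratedDeriv i f) U := by
  induction i with
  | zero => simpa using hf
  | succ k ih => rw [iteratedDeriv_succ]; exact ih.deriv

private lemma diffAt_multiset_sum {α : Type*} (l : Multiset α) (h : α → ℂ → ℂ) (x : ℂ)
    (hd : ∀ q ∈ l, DifferentiableAt ℂ (h q) x) :
    DifferentiableAt ℂ (fun y => (l.map (fun q => h q y)).sum) x := by
  induction l using Multiset.induction with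
  | empty => simpa using differentiableAt_const (0 : ℂ)
  | cons a s ih =>
      simp only [Multiset.map_cons, Multiset.sum_cons]
      exact (hd a (Multiset.mem_cons_self a s)).add
        (ih fun q hq => hd q (Multiset.mem_cons_of_mem hq))

private lemma deriv_multiset_sum {α : Type*} (l : Multiset α) (h : α → ℂ → ℂ) (x : ℂ)
    (hd : ∀ q ∈ l, DifferentiableAt ℂ (h q) x) :
    deriv (fun y => (l.map (fun q => h q y)).sum) x = (l.map (fun q => deriv (h q) x)).sum := by
  induction l using Multiset.induction with
  | empty => simp
  | cons a s ih =>
      simp only [Multiset.map_cons, Multiset.sum_cons]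
      rw [deriv_fun_add (hd a (Multiset.mem_cons_self a s))
        (diffAt_multiset_sum s h x fun q hq => hd q (Multiset.mem_cons_of_mem hq)),
        ih fun q hq => hd q (Multiset.mem_cons_of_mem hq)]

/-- Leibniz-type representation: the `p`-th derivative of a product of two functions
analytic on an open set is a linear combination of products of derivatives with total
order `p`. -/
private lemma leibniz_repr {U : Set ℂ} (hU : IsOpen U) {f g : ℂ → ℂ}
    (hf : AnalyticOnNhd ℂ f U) (hg : AnalyticOnNhd ℂ g U) (p : ℕ) :
    ∃ l : Multiset (ℂ × ℕ × ℕ), (∀ q ∈ l, q.2.1 + q.2.2 = p) ∧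
      ∀ x ∈ U, iteratedDeriv p (fun w => f w * g w) x =
        (l.map (fun q => q.1 * (iteratedDeriv q.2.1 f x * iteratedDeriv q.2.2 g x))).sum := by
  induction p with
  | zero =>
      refine ⟨{(1, 0, 0)}, by simp, fun x hx => ?_⟩
      simp
  | succ p ih =>
      obtain ⟨l, hl, hsum⟩ := ih
      refine ⟨l.map (fun q => (q.1, q.2.1 + 1, q.2.2)) + l.map (fun q => (q.1, q.2.1, q.2.2 + 1)),
        ?_, fun x hx => ?_⟩
      · intro q hq
        rcases Multiset.mem_add.1 hq with h | h <;>
          · obtain ⟨r, hr, rfl⟩ := Multiset.mem_map.1 h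
            have := hl r hr
            simp only [] at *
            omega
      · have hmem : U ∈ nhds x := hU.mem_nhds hx
        have hev : iteratedDeriv p (fun w => f w * g w) =ᶠ[nhds x]
            fun w => (l.map (fun q =>
              q.1 * (iteratedDeriv q.2.1 f w * iteratedDeriv q.2.2 g w))).sum :=
          Filter.eventually_of_mem hmem fun w hw => hsum w hw
        have hdF : ∀ i, DifferentiableAt ℂ (iteratedDeriv i f) x :=
          fun i => ((analyticOnNhd_iteratedDeriv' hf i) x hx).differentiableAt
        have hdG : ∀ i, DifferentiableAt ℂ (iteratedDeriv i g) x :=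
          fun i => ((analyticOnNhd_iteratedDeriv' hg i) x hx).differentiableAt
        have hdiff : ∀ q ∈ l, DifferentiableAt ℂ
            (fun w => q.1 * (iteratedDeriv q.2.1 f w * iteratedDeriv q.2.2 g w)) x :=
          fun q _ => (differentiableAt_const q.1).mul ((hdF q.2.1).mul (hdG q.2.2))
        calc iteratedDeriv (p + 1) (fun w => f w * g w) x
            = deriv (iteratedDeriv p (fun w => f w * g w)) x := by rw [iteratedDeriv_succ]
          _ = deriv (fun w => (l.map (fun q =>
                q.1 * (iteratedDeriv q.2.1 f w * iteratedDeriv q.2.2 g w))).sum) x :=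
              hev.deriv_eq
          _ = (l.map (fun q => deriv (fun w =>
                q.1 * (iteratedDeriv q.2.1 f w * iteratedDeriv q.2.2 g w)) x)).sum :=
              deriv_multiset_sum l _ x hdiff
          _ = (l.map (fun q =>
                q.1 * (iteratedDeriv (q.2.1 + 1) f x * iteratedDeriv q.2.2 g x)
                + q.1 * (iteratedDeriv q.2.1 f x * iteratedDeriv (q.2.2 + 1) g x))).sum := by
              refine congrArg _ (Multiset.map_congr rfl fun q _ => ?_)
              rw [deriv_const_mul (d := fun w => iteratedDeriv q.2.1 f w * iteratedDeriv q.2.2 g w) _ ((hdF q.2.1).mul (hdG q.2.2)),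
                deriv_fun_mul (hdF q.2.1) (hdG q.2.2), iteratedDeriv_succ, iteratedDeriv_succ,
                mul_add]
          _ = _ := by
              rw [Multiset.sum_map_add, Multiset.map_add, Multiset.sum_add,
                Multiset.map_map, Multiset.map_map]
              rfl

private lemma iteratedDeriv_polynomial (p : ℕ) (Q : Polynomial ℂ) :
    iteratedDeriv p (fun w => Polynomial.eval w Q) =
      fun x => Polynomial.eval x (Polynomial.derivative^[p] Q) := by
  induction p generalizing Q with
  | zero => simp
  | succ p ih =>
      rw [iteratedDeriv_succ']
      have : deriv (fun w => Polynomial.eval w Q) =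
          fun w => Polynomial.eval w (Polynomial.derivative Q) :=
        funext fun w => Polynomial.deriv Q
      rw [this, ih, Function.iterate_succ_apply]

/-- Lemma 5.3 (scalar form): a function `f = Q / ∏_{y ∈ ζ} (· - y)^{m y}` meromorphic with
poles at `ζ` of bounded order, whose holomorphic jets up to order `n x - 1` vanish at each
pole `x ∈ z` of the 1-form `ω`, must vanish identically (i.e. the jet map is injective). -/
theorem jet_map_injective_meromorphic (z ζ : Finset ℂ)
    (hdisj : (↑z : Set ℂ) ∩ (↑ζ : Set ℂ) = ∅)
    (n m : ℂ → ℕ) (mInf : ℕ) (Q : Polynomial ℂ)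
    (hdeg : Q.natDegree ≤ (∑ y ∈ ζ, m y) + mInf)
    (hsum : ∑ x ∈ z, n x = (∑ y ∈ ζ, m y) + mInf + 2)
    (f : ℂ → ℂ) (hf : f = fun w => Polynomial.eval w Q / ∏ y ∈ ζ, (w - y) ^ (m y))
    (hjet : ∀ x ∈ z, ∀ p < n x, iteratedDeriv p f x = 0) :
    Q = 0 ∧ f = 0 := by
  classical
  set P : Polynomial ℂ := ∏ y ∈ ζ, (Polynomial.X - Polynomial.C y) ^ (m y) with hP
  have hPeval : ∀ w : ℂ, Polynomial.eval w P = ∏ y ∈ ζ, (w - y) ^ (m y) := by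
    intro w; simp [hP, Polynomial.eval_prod]
  set U : Set ℂ := {w : ℂ | Polynomial.eval w P ≠ 0} with hU
  have hUopen : IsOpen U := isOpen_ne.preimage P.continuous
  -- each x ∈ z lies in U
  have hzU : ∀ x ∈ z, x ∈ U := by
    intro x hx
    have hxζ : ∀ y ∈ ζ, x ≠ y := by
      intro y hy hxy
      have : x ∈ (↑z : Set ℂ) ∩ (↑ζ : Set ℂ) := ⟨by exact_mod_cast hx, by rw [hxy]; exact_mod_cast hy⟩
      rw [hdisj] at this; exact this
    have : Polynomial.eval x P ≠ 0 := by
      rw [hPeval]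
      exact Finset.prod_ne_zero_iff.2 fun y hy =>
        pow_ne_zero _ (sub_ne_zero.2 (hxζ y hy))
    exact this
  -- analyticity
  have hfdiff : DifferentiableOn ℂ f U := by
    rw [hf]
    refine DifferentiableOn.div (Polynomial.differentiable Q).differentiableOn ?_ ?_
    · intro w _
      have : DifferentiableAt ℂ (fun w => Polynomial.eval w P) w := P.differentiableAt
      simp only [hPeval] at this
      exact this.differentiableWithinAt
    · intro w hw
      rw [← hPeval]; exact hw
  have hfa : AnalyticOnNhd ℂ f U := hfdiff.analyticOnNhd hUopen
  have hga : AnalyticOnNhd ℂ (fun w => Polynomial.eval w P) U :=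
    ((Polynomial.differentiable P).differentiableOn).analyticOnNhd hUopen
  -- Q agrees with f * P on U
  have heq : ∀ w ∈ U, Polynomial.eval w Q = f w * Polynomial.eval w P := by
    intro w hw
    rw [hf]
    simp only [← hPeval]
    rw [div_mul_cancel₀ _ hw]
  -- jets of Q vanish at each x ∈ z up to order n x
  have hQjet : ∀ x ∈ z, ∀ p < n x, Polynomial.eval x (Polynomial.derivative^[p] Q) = 0 := by
    intro x hx p hp
    obtain ⟨l, hl, hrep⟩ := leibniz_repr hUopen hfa hga p
    have hxU := hzU x hx
    have hev : (fun w => Polynomial.eval w Q) =ᶠ[nhds x] fun w => f w * Polynomial.eval w P :=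
      Filter.eventually_of_mem (hUopen.mem_nhds hxU) fun w hw => heq w hw
    have h1 : iteratedDeriv p (fun w => Polynomial.eval w Q) x
        = iteratedDeriv p (fun w => f w * Polynomial.eval w P) x := hev.iteratedDeriv_eq p
    have h2 := hrep x hxU
    have h3 : (l.map (fun q => q.1 * (iteratedDeriv q.2.1 f x *
        iteratedDeriv q.2.2 (fun w => Polynomial.eval w P) x))).sum = 0 := by
      refine Multiset.sum_eq_zero ?_
      intro a ha
      obtain ⟨q, hq, rfl⟩ := Multiset.mem_map.1 ha
      have : q.2.1 < n x := by have := hl q hq; omega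
      rw [hjet x hx q.2.1 this]
      ring
    have := (iteratedDeriv_polynomial p Q)
    calc Polynomial.eval x (Polynomial.derivative^[p] Q)
        = iteratedDeriv p (fun w => Polynomial.eval w Q) x := by rw [this]
      _ = 0 := by rw [h1, h2, h3]
  -- conclude Q = 0
  have hQ0 : Q = 0 := by
    by_contra hQ
    have hmult : ∀ x ∈ z, n x ≤ Q.rootMultiplicity x := by
      intro x hx
      rcases Nat.eq_zero_or_pos (n x) with h0 | h0
      · omega
      · have : n x - 1 < Q.rootMultiplicity x := by
          refine Polynomial.lt_rootMultiplicity_of_isRoot_iterate_derivative_of_mem_nonZeroDivisors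
            hQ (fun k hk => hQjet x hx k (by omega)) ?_
          exact mem_nonZeroDivisors_of_ne_zero (by exact_mod_cast Nat.factorial_ne_zero _)
        omega
    have hcount : ∀ x ∈ z, n x ≤ Q.roots.count x := by
      intro x hx; rw [Polynomial.count_roots]; exact hmult x hx
    have hle : ∑ x ∈ z, n x ≤ Q.natDegree := by
      calc ∑ x ∈ z, n x ≤ ∑ x ∈ z, Q.roots.count x := Finset.sum_le_sum hcount
        _ ≤ ∑ x ∈ z ∪ Q.roots.toFinset, Q.roots.count x :=
            Finset.sum_le_sum_of_subset Finset.subset_union_left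
        _ = Multiset.card Q.roots := Multiset.sum_count_eq_card fun a ha =>
            Finset.mem_union_right _ (Multiset.mem_toFinset.2 ha)
        _ ≤ Q.natDegree := Polynomial.card_roots' Q
    omega
  refine ⟨hQ0, ?_⟩
  funext w
  rw [hf]
  simp [hQ0]
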